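/- Let α̃ = (0)(1 2 … n)(n+1 … 2n) ∈ S_0(2n) and let π range over pair partitions of [2n] pairing each element of {1,…,n} with an element of {n+1,…,2n} (viewed as products of n transpositions). There is exactly one such π, namely π = (1, 2n)(2, 2n-1)⋯(n, n+1), with the property that πα̃ is a product of (0) and n transpositions one of which is (n, 2n). -/
import Mathlib

/-- The canonical pair partition `i ↦ 2n+1-i` on `{1,…,2n}`. -/
noncomputable def stmt11Perm (n : ℕ) : Equiv.Perm ℕ :=
  Function.Involutive.toPerm
    (fun i => if 1 ≤ i ∧ i ≤ 2 * n then 2 * n + 1 - i else i)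
    (by intro i; dsimp only; split_ifs <;> omega)

lemma stmt11Perm_apply (n i : ℕ) :
    stmt11Perm n i = if 1 ≤ i ∧ i ≤ 2 * n then 2 * n + 1 - i else i := rfl

/-- With `α̃ = (0)(1 2 … n)(n+1 … 2n)` (a permutation of ℕ fixing everything
outside `{0,…,2n}`), there is exactly one pair partition `π ∈ 𝒫₂(n,n)` (a fixed-point-free
involution on `{1,…,2n}`, fixing everything else, pairing `{1,…,n}` with `{n+1,…,2n}`)
such that `πα̃` fixes `0`, is a fixed-point-free involution on `{1,…,2n}` (a product of `n`
transpositions) and has `(n, 2n)` as one of its transpositions; namely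
`π = (1,2n)(2,2n-1)⋯(n,n+1)`, i.e. `π i = 2n+1-i` on `{1,…,2n}`. -/
theorem stmt11 (n : ℕ) (hn : 1 ≤ n) (α : Equiv.Perm ℕ)
    (hα0 : α 0 = 0)
    (hα1 : ∀ i, 1 ≤ i → i < n → α i = i + 1) (hαn : α n = 1)
    (hα2 : ∀ i, n + 1 ≤ i → i < 2 * n → α i = i + 1) (hα2n : α (2 * n) = n + 1)
    (hαout : ∀ i, 2 * n < i → α i = i) :
    (∃! π : Equiv.Perm ℕ,
      ((∀ i, 1 ≤ i → i ≤ n → n + 1 ≤ π i ∧ π i ≤ 2 * n) ∧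
       (∀ i, 1 ≤ i → i ≤ 2 * n → π (π i) = i ∧ π i ≠ i) ∧
       (π 0 = 0) ∧ (∀ i, 2 * n < i → π i = i)) ∧
      ((π * α) 0 = 0 ∧
       (∀ i, 1 ≤ i → i ≤ 2 * n → (π * α) ((π * α) i) = i ∧ (π * α) i ≠ i) ∧
       (π * α) n = 2 * n)) ∧
    (∀ π : Equiv.Perm ℕ,
      ((∀ i, 1 ≤ i → i ≤ n → n + 1 ≤ π i ∧ π i ≤ 2 * n) ∧
       (∀ i, 1 ≤ i → i ≤ 2 * n → π (π i) = i ∧ π i ≠ i) ∧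
       (π 0 = 0) ∧ (∀ i, 2 * n < i → π i = i)) →
      ((π * α) 0 = 0 ∧
       (∀ i, 1 ≤ i → i ≤ 2 * n → (π * α) ((π * α) i) = i ∧ (π * α) i ≠ i) ∧
       (π * α) n = 2 * n) →
      ∀ i, 1 ≤ i → i ≤ 2 * n → π i = 2 * n + 1 - i) := by
  -- the uniqueness core
  have key : ∀ π : Equiv.Perm ℕ,
      ((∀ i, 1 ≤ i → i ≤ n → n + 1 ≤ π i ∧ π i ≤ 2 * n) ∧
       (∀ i, 1 ≤ i → i ≤ 2 * n → π (π i) = i ∧ π i ≠ i) ∧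
       (π 0 = 0) ∧ (∀ i, 2 * n < i → π i = i)) →
      ((π * α) 0 = 0 ∧
       (∀ i, 1 ≤ i → i ≤ 2 * n → (π * α) ((π * α) i) = i ∧ (π * α) i ≠ i) ∧
       (π * α) n = 2 * n) →
      ∀ i, 1 ≤ i → i ≤ 2 * n → π i = 2 * n + 1 - i := by
    rintro π ⟨h1, h2, h3, h4⟩ ⟨k1, k2, k3⟩
    have hπ1 : π 1 = 2 * n := by
      rw [Equiv.Perm.mul_apply, hαn] at k3; exact k3
    -- first half by induction
    have main : ∀ i, i ≤ n → 1 ≤ i → π i = 2 * n + 1 - i := by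
      intro i
      induction i with
      | zero => omega
      | succ j ih =>
        intro hle h1j
        rcases Nat.eq_zero_or_pos j with hj | hj
        · subst hj
          have : 2 * n + 1 - 1 = 2 * n := by omega
          rw [this]; exact hπ1
        · have hjn : j < n := by omega
          have ihj : π j = 2 * n + 1 - j := ih (by omega) hj
          have hs := (k2 j hj (by omega)).1
          rw [Equiv.Perm.mul_apply, Equiv.Perm.mul_apply, hα1 j hj hjn] at hs
          -- hs : π (α (π (j+1))) = j
          obtain ⟨hb1, hb2⟩ := h1 (j + 1) (by omega) hle
          have hne : π (j + 1) ≠ 2 * n := by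
            intro h
            have := π.injective (hπ1.trans h.symm)
            omega
          rw [hα2 (π (j + 1)) hb1 (by omega)] at hs
          -- hs : π (π (j+1) + 1) = j
          have hpj : π (π j) = j := (h2 j hj (by omega)).1
          have := π.injective (hs.trans hpj.symm)
          omega
    intro i hi1 hi2
    rcases le_or_gt i n with h | h
    · exact main i h hi1
    · have hm1 : 1 ≤ 2 * n + 1 - i := by omega
      have hm2 : 2 * n + 1 - i ≤ n := by omega
      have e := main _ hm2 hm1
      have e2 := (h2 (2 * n + 1 - i) hm1 (by omega)).1
      rw [e] at e2
      have hi : 2 * n + 1 - (2 * n + 1 - i) = i := by omega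
      rw [hi] at e2
      exact e2
  set w := stmt11Perm n with hwdef
  have hw : ∀ i, w i = if 1 ≤ i ∧ i ≤ 2 * n then 2 * n + 1 - i else i :=
    fun i => stmt11Perm_apply n i
  have hwP : ((∀ i, 1 ≤ i → i ≤ n → n + 1 ≤ w i ∧ w i ≤ 2 * n) ∧
       (∀ i, 1 ≤ i → i ≤ 2 * n → w (w i) = i ∧ w i ≠ i) ∧
       (w 0 = 0) ∧ (∀ i, 2 * n < i → w i = i)) ∧
      ((w * α) 0 = 0 ∧
       (∀ i, 1 ≤ i → i ≤ 2 * n → (w * α) ((w * α) i) = i ∧ (w * α) i ≠ i) ∧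
       (w * α) n = 2 * n) := by
    have hσ : ∀ i, 1 ≤ i → i ≤ 2 * n →
        (w * α) i = if i = n then 2 * n else if i = 2 * n then n else 2 * n - i := by
      intro i h1 h2
      rw [Equiv.Perm.mul_apply]
      rcases Nat.lt_or_ge i n with h | h
      · rw [hα1 i h1 h, hw, if_pos (by omega), if_neg (by omega), if_neg (by omega)]
        omega
      rcases Nat.eq_or_lt_of_le h with h' | h'
      · rw [← h', hαn, hw, if_pos (by omega), if_pos rfl]
        omega
      rcases Nat.lt_or_ge i (2 * n) with h'' | h''
      · rw [hα2 i (by omega) h'', hw, if_pos (by omega), if_neg (by omega),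
          if_neg (by omega)]
        omega
      · have : i = 2 * n := by omega
        rw [this, hα2n, hw, if_pos (by omega), if_neg (by omega), if_pos rfl]
        omega
    refine ⟨⟨?_, ?_, ?_, ?_⟩, ?_, ?_, ?_⟩
    · intro i hi hin
      rw [hw, if_pos ⟨hi, by omega⟩]; omega
    · intro i h1 h2
      constructor
      · rw [hw i, if_pos ⟨h1, h2⟩, hw, if_pos (by omega)]; omega
      · rw [hw i, if_pos ⟨h1, h2⟩]; omega
    · rw [hw, if_neg (by omega)]
    · intro i hi; rw [hw, if_neg (by omega)]
    · rw [Equiv.Perm.mul_apply, hα0, hw, if_neg (by omega)]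
    · intro i h1 h2
      constructor
      · rw [hσ i h1 h2]
        split_ifs with e1 e2
        · rw [hσ (2 * n) (by omega) (by omega)]
          split_ifs <;> omega
        · rw [hσ n (by omega) (by omega)]
          split_ifs <;> omega
        · rw [hσ (2 * n - i) (by omega) (by omega)]
          split_ifs <;> omega
      · rw [hσ i h1 h2]
        split_ifs <;> omega
    · rw [hσ n (by omega) (by omega), if_pos rfl]
  refine ⟨⟨w, hwP, ?_⟩, key⟩
  intro y hy
  ext i
  rcases Nat.eq_zero_or_pos i with h0 | h0
  · subst h0
    rw [hy.1.2.2.1, hw, if_neg (by omega)]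
  rcases le_or_gt i (2 * n) with hle | hlt
  · rw [key y hy.1 hy.2 i h0 hle, hw, if_pos ⟨h0, hle⟩]
  · rw [hy.1.2.2.2 i hlt, hw, if_neg (by omega)]
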